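/- Let n be a positive integer, δ ∈ {0, 1}, and β ∈ ℂ \ {0} with |β| ≥ ((1 + e²)^{3/2}/(√2 e))^n (√2 + ω₀^δ). If p ∈ ℋ satisfies (p(z))^δ + β (z p′(z))^n ≺ √(1 + z) (principal branch), then p(z) ≺ 𝔅(z). -/

import Mathlib

open Complex

noncomputable section

/-- The open unit disk in the complex plane. -/
def unitDisk : Set ℂ := Metric.ball 0 1

/-- `f` is subordinate to `g` on the unit disk: there is an analytic Schwarz function `w`
with `w 0 = 0`, `|w z| < 1` on the disk, and `f = g ∘ w` on the disk. -/
def Subord (f g : ℂ → ℂ) : Prop :=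
  ∃ w : ℂ → ℂ, DifferentiableOn ℂ w unitDisk ∧ w 0 = 0 ∧
    (∀ z ∈ unitDisk, ‖w z‖ < 1) ∧ ∀ z ∈ unitDisk, f z = g (w z)

/-- The function `𝔅(z) = √(1 + tanh z)` (principal branch). -/
def bean (z : ℂ) : ℂ := (1 + Complex.tanh z) ^ ((1 : ℂ) / 2)

/-- `R₀ = e √(2/(e² - 1))`. -/
def R₀ : ℝ := Real.exp 1 * Real.sqrt (2 / (Real.exp 1 ^ 2 - 1))

/-- `ω₀ = max_{θ ∈ [0, 2π)} |𝔅(e^{iθ})|`. -/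
def ω₀ : ℝ :=
  sSup ((fun θ : ℝ => ‖bean (Complex.exp (θ * Complex.I))‖) '' Set.Ico 0 (2 * Real.pi))

lemma aux_abs_half (x : ℂ) : ‖x ^ ((1:ℂ)/2)‖ ≤ Real.sqrt (‖x‖) := by
  rcases eq_or_ne x 0 with rfl | hx
  · rw [Complex.zero_cpow (by norm_num : (1:ℂ)/2 ≠ 0)]
    simp [Real.sqrt_nonneg]
  · have h := Complex.norm_cpow_le x ((1:ℂ)/2)
    simpa [Real.sqrt_eq_rpow] using h

lemma aux_kappa : (6:ℝ) ≤ (1 + Real.exp 1 ^ 2) ^ ((3:ℝ)/2) / (Real.sqrt 2 * Real.exp 1) := by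
  have he : (2.7182818283 : ℝ) < Real.exp 1 := Real.exp_one_gt_d9
  have he' : Real.exp 1 < 2.7182818286 := Real.exp_one_lt_d9
  have hx : (0:ℝ) ≤ 1 + Real.exp 1 ^ 2 := by positivity
  have hrw : (1 + Real.exp 1 ^ 2) ^ ((3:ℝ)/2) = Real.sqrt ((1 + Real.exp 1 ^ 2)^3) := by
    rw [Real.sqrt_eq_rpow, ← Real.rpow_natCast (1 + Real.exp 1 ^ 2) 3, ← Real.rpow_mul hx]
    norm_num
  have hs2 : (0:ℝ) < Real.sqrt 2 := Real.sqrt_pos.2 (by norm_num)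
  have hepos : (0:ℝ) < Real.exp 1 := Real.exp_pos 1
  rw [hrw, le_div_iff₀ (by positivity)]
  have h2 : Real.sqrt 2 ^ 2 = 2 := Real.sq_sqrt (by norm_num)
  have h72 : (6 * (Real.sqrt 2 * Real.exp 1))^2 = 72 * Real.exp 1 ^2 := by
    rw [mul_pow, mul_pow, h2]; ring
  have hE2 : (7.389:ℝ) ≤ Real.exp 1 ^ 2 := by nlinarith [he]
  have key : (6 * (Real.sqrt 2 * Real.exp 1))^2 ≤ (1 + Real.exp 1 ^ 2)^3 := by
    rw [h72]
    nlinarith [hE2, sq_nonneg (Real.exp 1 ^ 2 - 7.389)]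
  calc 6 * (Real.sqrt 2 * Real.exp 1)
      = Real.sqrt ((6 * (Real.sqrt 2 * Real.exp 1))^2) := by
        rw [Real.sqrt_sq (by positivity)]
    _ ≤ Real.sqrt ((1 + Real.exp 1 ^ 2)^3) := Real.sqrt_le_sqrt key

lemma aux_sqrt_sq {x : ℂ} (hx : 0 < x.re) : (x^2) ^ ((1:ℂ)/2) = x := by
  have hx0 : x ≠ 0 := by
    intro h; rw [h] at hx; simp at hx
  have harg : |Complex.arg x| < Real.pi / 2 :=
    Complex.abs_arg_lt_pi_div_two_iff.2 (Or.inl hx)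
  have hx2 : x^2 ≠ 0 := pow_ne_zero 2 hx0
  have hexp : x^2 = Complex.exp (2 * Complex.log x) := by
    rw [two_mul, Complex.exp_add, Complex.exp_log hx0]; ring
  have him : (2 * Complex.log x).im = 2 * Complex.arg x := by
    simp [Complex.log_im]
  have hpi : 0 < Real.pi := Real.pi_pos
  have hlog : Complex.log (x^2) = 2 * Complex.log x := by
    rw [hexp, Complex.log_exp] <;> rw [him]
    · rcases abs_lt.1 harg with ⟨h1, _⟩; linarith
    · rcases abs_lt.1 harg with ⟨_, h2⟩; linarith
  rw [Complex.cpow_def_of_ne_zero hx2, hlog]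
  have : 2 * Complex.log x * ((1:ℂ)/2) = Complex.log x := by ring
  rw [this, Complex.exp_log hx0]

lemma aux_tanh_half_log {r : ℂ} (hr : r ≠ 0) (hr1 : r + 1 ≠ 0) :
    Complex.tanh (((1:ℂ)/2) * Complex.log r) = (r - 1)/(r + 1) := by
  set u := ((1:ℂ)/2) * Complex.log r with hu
  have he2u : Complex.exp u * Complex.exp u = r := by
    rw [← Complex.exp_add]
    have : u + u = Complex.log r := by rw [hu]; ring
    rw [this, Complex.exp_log hr]
  have hinv : Complex.exp u * Complex.exp (-u) = 1 := by
    rw [← Complex.exp_add]; simp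
  have hAB : Complex.exp u + Complex.exp (-u) ≠ 0 := by
    intro h
    have h2 : Complex.exp u * (Complex.exp u + Complex.exp (-u)) = 0 := by rw [h, mul_zero]
    rw [mul_add, he2u, hinv] at h2
    exact hr1 h2
  rw [Complex.tanh_eq_sinh_div_cosh, Complex.sinh, Complex.cosh]
  field_simp
  linear_combination 2 * Complex.exp (-u) * he2u - 2 * Complex.exp u * hinv

lemma aux_log_bound {r : ℂ} (hre : 0 < r.re) (hlo : (7/18:ℝ) ≤ ‖r‖)
    (hup : ‖r‖ ≤ 18/7) : ‖Complex.log r‖ < 2 := by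
  have hexp95 : (18/7 : ℝ) ≤ Real.exp (95/100) := by
    have h1 : Real.exp (95/100) = Real.exp 1 * Real.exp (-(1/20)) := by
      rw [← Real.exp_add]; norm_num
    have h2 : (19/20:ℝ) ≤ Real.exp (-(1/20)) := by
      have := Real.add_one_le_exp (-(1/20):ℝ)
      linarith
    have h3 : (2.7182818283 : ℝ) < Real.exp 1 := Real.exp_one_gt_d9
    rw [h1]
    nlinarith [Real.exp_pos (-(1/20):ℝ)]
  have hlogub : Real.log (‖r‖) ≤ 95/100 := by
    rw [Real.log_le_iff_le_exp (by linarith : (0:ℝ) < ‖r‖)]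
    linarith
  have hloglb : -(95/100) ≤ Real.log (‖r‖) := by
    have h1 : Real.log (7/18) ≤ Real.log (‖r‖) :=
      Real.log_le_log (by norm_num) hlo
    have h2 : Real.log (7/18 : ℝ) = - Real.log (18/7) := by
      rw [show (7/18:ℝ) = (18/7)⁻¹ by norm_num, Real.log_inv]
    have h3 : Real.log (18/7 : ℝ) ≤ 95/100 := by
      rw [Real.log_le_iff_le_exp (by norm_num)]
      linarith
    linarith
  have harg : |Complex.arg r| ≤ Real.pi/2 :=
    Complex.abs_arg_le_pi_div_two_iff.2 hre.le
  have habslog : ‖Complex.log r‖^2 ≤ (95/100)^2 + (Real.pi/2)^2 := by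
    rw [Complex.sq_norm, Complex.normSq_apply, Complex.log_re, Complex.log_im]
    have h1 : (Real.log (‖r‖))^2 ≤ (95/100)^2 := by
      nlinarith [hlogub, hloglb]
    have h2 : (Complex.arg r)^2 ≤ (Real.pi/2)^2 := by
      nlinarith [harg, neg_abs_le (Complex.arg r), le_abs_self (Complex.arg r)]
    nlinarith [h1, h2]
  have hpi : Real.pi < 3.1416 := by
    have := Real.pi_lt_d6
    linarith
  nlinarith [norm_nonneg (Complex.log r), habslog, Real.pi_pos]

lemma aux_cosh_lower {z : ℂ} (hz : ‖z‖ ≤ 1) :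
    (1/2 : ℝ) ≤ ‖Complex.cosh z‖ := by
  have him : |z.im| ≤ 1 := (Complex.abs_im_le_norm z).trans hz
  have hre : Complex.cosh z = (Real.cosh z.re * Real.cos z.im : ℝ) +
      (Real.sinh z.re * Real.sin z.im : ℝ) * Complex.I := by
    conv_lhs => rw [← Complex.re_add_im z]
    rw [Complex.cosh_add, Complex.cosh_mul_I, Complex.sinh_mul_I]
    push_cast
    ring
  have hre2 : (Complex.cosh z).re = Real.cosh z.re * Real.cos z.im := by
    rw [hre, Complex.add_re, Complex.ofReal_re, Complex.mul_re, Complex.ofReal_im,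
      Complex.I_re, Complex.I_im]
    ring
  have h1 : (1:ℝ) ≤ Real.cosh z.re := Real.one_le_cosh z.re
  have h2 : (1/2:ℝ) ≤ Real.cos z.im := by
    have := Real.one_sub_sq_div_two_le_cos (x := z.im)
    nlinarith [abs_nonneg z.im, _root_.sq_abs z.im, him]
  calc (1/2:ℝ) ≤ Real.cosh z.re * Real.cos z.im := by nlinarith
    _ = (Complex.cosh z).re := hre2.symm
    _ ≤ ‖Complex.cosh z‖ := Complex.re_le_norm _

lemma aux_tanh_bound {z : ℂ} (hz : ‖z‖ ≤ 1) :
    ‖Complex.tanh z‖ ≤ 6 := by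
  have hcosh := aux_cosh_lower hz
  have hsinh : ‖Complex.sinh z‖ ≤ 3 := by
    rw [Complex.sinh]
    have h1 : ‖Complex.exp z‖ ≤ Real.exp 1 := by
      rw [Complex.norm_exp]
      exact Real.exp_le_exp.2 ((Complex.re_le_norm z).trans hz)
    have h2 : ‖Complex.exp (-z)‖ ≤ Real.exp 1 := by
      rw [Complex.norm_exp]
      have : (-z).re ≤ 1 := by
        rw [Complex.neg_re]
        have := Complex.abs_re_le_norm z
        cases abs_le.1 this with
        | intro h _ => linarith [hz]
      exact Real.exp_le_exp.2 this
    have he : Real.exp 1 < 2.7182818286 := Real.exp_one_lt_d9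
    calc ‖(Complex.exp z - Complex.exp (-z)) / 2‖
        ≤ (‖Complex.exp z‖ + ‖Complex.exp (-z)‖) / 2 := by
          rw [norm_div]
          simp only [Complex.norm_two]
          gcongr
          exact (norm_sub_le _ _)
      _ ≤ (Real.exp 1 + Real.exp 1) / 2 := by linarith
      _ ≤ 3 := by linarith
  rw [Complex.tanh_eq_sinh_div_cosh, norm_div]
  rw [div_le_iff₀ (by linarith)]
  nlinarith

lemma aux_omega : (1:ℝ) ≤ ω₀ := by
  have hbdd : BddAbove ((fun θ : ℝ => ‖bean (Complex.exp (θ * Complex.I))‖) ''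
      Set.Ico 0 (2 * Real.pi)) := by
    refine ⟨Real.sqrt 7, ?_⟩
    rintro x ⟨θ, _, rfl⟩
    have habs : ‖Complex.exp (θ * Complex.I)‖ = 1 := by
      rw [show ((θ:ℂ) * Complex.I) = ((θ:ℝ) : ℂ) * Complex.I by norm_num]
      exact Complex.norm_exp_ofReal_mul_I θ
    have htanh := aux_tanh_bound (le_of_eq habs)
    calc ‖bean (Complex.exp (θ * Complex.I))‖
        ≤ Real.sqrt (‖1 + Complex.tanh (Complex.exp (θ * Complex.I))‖) :=
          aux_abs_half _
      _ ≤ Real.sqrt 7 := by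
          apply Real.sqrt_le_sqrt
          calc ‖1 + Complex.tanh (Complex.exp (θ * Complex.I))‖
              ≤ 1 + ‖Complex.tanh (Complex.exp (θ * Complex.I))‖ := by
                simpa using norm_add_le (1:ℂ) _
            _ ≤ 7 := by linarith
  have hmem : (1 + Real.tanh 1 : ℝ) ^ ((1:ℝ)/2) ∈
      ((fun θ : ℝ => ‖bean (Complex.exp (θ * Complex.I))‖) ''
        Set.Ico 0 (2 * Real.pi)) := by
    refine ⟨0, ⟨le_refl 0, by positivity⟩, ?_⟩
    show ‖bean (Complex.exp ((0:ℝ) * Complex.I))‖ = _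
    have h0 : ((0:ℝ):ℂ) * Complex.I = 0 := by simp
    rw [h0, Complex.exp_zero]
    unfold bean
    have h1 : (1 : ℂ) + Complex.tanh 1 = ((1 + Real.tanh 1 : ℝ) : ℂ) := by
      push_cast [Complex.ofReal_tanh]
      ring
    rw [h1]
    have hpos : (0:ℝ) < 1 + Real.tanh 1 := by
      have ht : 0 ≤ Real.tanh 1 := by
        rw [Real.tanh_eq_sinh_div_cosh]
        exact div_nonneg (le_of_lt (Real.sinh_pos_iff.2 one_pos)) (le_of_lt (Real.cosh_pos 1))
      linarith
    rw [Complex.norm_cpow_eq_rpow_re_of_pos hpos]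
    norm_num
  have h1 : (1:ℝ) ≤ (1 + Real.tanh 1 : ℝ) ^ ((1:ℝ)/2) := by
    apply Real.one_le_rpow
    · have ht : 0 ≤ Real.tanh 1 := by
        rw [Real.tanh_eq_sinh_div_cosh]
        exact div_nonneg (le_of_lt (Real.sinh_pos_iff.2 one_pos)) (le_of_lt (Real.cosh_pos 1))
      linarith
    · norm_num
  exact h1.trans (le_csSup hbdd hmem)

set_option maxHeartbeats 2000000 in
theorem stmt_11 (n : ℕ) (hn : 0 < n) (δ : ℕ) (hδ : δ = 0 ∨ δ = 1)
    (β : ℂ) (hβ0 : β ≠ 0)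
    (hβ : ((1 + Real.exp 1 ^ 2) ^ ((3 : ℝ) / 2) / (Real.sqrt 2 * Real.exp 1)) ^ n *
        (Real.sqrt 2 + ω₀ ^ δ) ≤ ‖β‖)
    (p : ℂ → ℂ) (hp : DifferentiableOn ℂ p unitDisk) (hp0 : p 0 = 1)
    (hsub : Subord (fun z => p z ^ δ + β * (z * deriv p z) ^ n)
        (fun z => (1 + z) ^ ((1 : ℂ) / 2))) :
    Subord p bean := by
  have hopen : IsOpen unitDisk := Metric.isOpen_ball
  have hmem : ∀ z : ℂ, z ∈ unitDisk ↔ ‖z‖ < 1 := by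
    intro z; rw [unitDisk, Metric.mem_ball, Complex.dist_eq, sub_zero]
  have h0mem : (0:ℂ) ∈ unitDisk := by rw [hmem]; simp
  set q : ℂ → ℂ := fun z => z * deriv p z with hqdef
  have hq0 : q 0 = 0 := by simp [hqdef]
  have hp' : DifferentiableOn ℂ (deriv p) unitDisk :=
    ((hp.analyticOnNhd hopen).deriv).differentiableOn
  have hq : DifferentiableOn ℂ q unitDisk := differentiableOn_id.mul hp'
  have hpdA : ∀ z : ℂ, ‖z‖ < 1 → DifferentiableAt ℂ p z := fun z hz =>
    hp.differentiableAt (hopen.mem_nhds ((hmem z).2 hz))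
  have hs2a : (1:ℝ) ≤ Real.sqrt 2 := by
    rw [show (1:ℝ) = Real.sqrt 1 by simp]
    exact Real.sqrt_le_sqrt (by norm_num)
  -- |β| is large
  have hω1 : (1:ℝ) ≤ ω₀ ^ δ := by
    rcases hδ with h | h <;> subst h
    · simp
    · simpa using aux_omega
  have hA : (6:ℝ)^n * (Real.sqrt 2 + 1) ≤ ‖β‖ := by
    refine le_trans ?_ hβ
    have hκ := aux_kappa
    exact mul_le_mul (pow_le_pow_left₀ (by norm_num) hκ n)
      (by linarith) (by positivity) (by positivity)
  -- pointwise key inequality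
  obtain ⟨w₁, hw₁d, hw₁0, hw₁lt, hw₁eq⟩ := hsub
  have key : ∀ z ∈ unitDisk,
      ‖β‖ * ‖q z‖ ^ n ≤ Real.sqrt 2 + ‖p z‖ ^ δ := by
    intro z hz
    have h1 : ‖p z ^ δ + β * q z ^ n‖ ≤ Real.sqrt 2 := by
      have heq := hw₁eq z hz
      simp only at heq
      rw [heq]
      refine le_trans (aux_abs_half _) (Real.sqrt_le_sqrt ?_)
      have h3 := (hw₁lt z hz).le
      calc ‖1 + w₁ z‖ ≤ ‖(1:ℂ)‖ + ‖w₁ z‖ := norm_add_le _ _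
        _ ≤ 2 := by rw [norm_one]; linarith
    have h2 : ‖β * q z ^ n‖ ≤ Real.sqrt 2 + ‖p z ^ δ‖ := by
      have hrw : β * q z ^ n = (p z ^ δ + β * q z ^ n) - p z ^ δ := by ring
      rw [hrw]
      refine le_trans (norm_sub_le _ _) ?_
      linarith
    rw [norm_mul, norm_pow] at h2
    rw [norm_pow] at h2
    exact h2
  -- Step B : q small on a disk forces p close to 1 there
  have stepB : ∀ s : ℝ, 0 < s → s < 1 →
      (∀ ζ : ℂ, ‖ζ‖ ≤ s → ‖q ζ‖ ≤ 1/5) →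
      ∀ ζ : ℂ, ‖ζ‖ ≤ s → ‖p ζ - 1‖ ≤ 1/5 := by
    intro s hs0 hs1 hqb
    have hball : Metric.ball (0:ℂ) s ⊆ unitDisk := by
      intro x hx
      rw [Metric.mem_ball, Complex.dist_eq, sub_zero] at hx
      exact (hmem x).2 (lt_trans hx hs1)
    have hdq : DifferentiableOn ℂ q (Metric.ball (0:ℂ) s) := hq.mono hball
    have hdsl : ∀ ζ ∈ Metric.ball (0:ℂ) s, ‖dslope q 0 ζ‖ ≤ (1/5)/s := by
      intro ζ hζ
      refine le_of_forall_pos_le_add ?_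
      intro ε hε
      have hmap : Set.MapsTo q (Metric.ball (0:ℂ) s) (Metric.ball (q 0) (1/5 + ε * s)) := by
        intro x hx
        rw [Metric.mem_ball, Complex.dist_eq, hq0, sub_zero]
        rw [Metric.mem_ball, Complex.dist_eq, sub_zero] at hx
        have := hqb x hx.le
        nlinarith
      have hb := Complex.norm_dslope_le_div_of_mapsTo_ball hdq (hmap.mono_right Metric.ball_subset_closedBall) hζ
      calc ‖dslope q 0 ζ‖ ≤ (1/5 + ε * s)/s := hb
        _ = (1/5)/s + ε := by field_simp
    have hpder : ∀ ζ ∈ Metric.ball (0:ℂ) s, ‖deriv p ζ‖ ≤ (1/5)/s := by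
      intro ζ hζ
      rcases eq_or_ne ζ 0 with rfl | hne
      · have h00 : dslope q 0 0 = deriv q 0 := dslope_same q 0
        have hdq0 : deriv q 0 = deriv p 0 := by
          have hdd : HasDerivAt (deriv p) (deriv (deriv p) 0) 0 :=
            (hp'.differentiableAt (hopen.mem_nhds h0mem)).hasDerivAt
          have hid : HasDerivAt (fun y : ℂ => y) 1 0 := hasDerivAt_id 0
          have hmul := hid.mul hdd
          rw [hqdef]
          simpa [Pi.mul_def] using hmul.deriv
        have hb := hdsl 0 hζ
        rw [h00, hdq0] at hb
        exact hb
      · have hb := hdsl ζ hζ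
        have hds : dslope q 0 ζ = deriv p ζ := by
          rw [dslope_of_ne q hne, slope_def_field, hq0, hqdef]
          field_simp
          ring
        rw [hds] at hb
        exact hb
    have hmvt : ∀ ζ ∈ Metric.ball (0:ℂ) s, ‖p ζ - p 0‖ ≤ (1/5)/s * ‖ζ - 0‖ := by
      intro ζ hζ
      exact Convex.norm_image_sub_le_of_norm_deriv_le
        (fun x hx => hpdA x (by
          have := hball hx; rw [hmem] at this; exact this)) hpder
        (convex_ball (0:ℂ) s) (Metric.mem_ball_self hs0) hζ
    intro ζ hζle
    have hζ1 : ‖ζ‖ < 1 := lt_of_le_of_lt hζle hs1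
    have hcont : ContinuousAt p ζ := (hpdA ζ hζ1).continuousAt
    have htendmul : Filter.Tendsto (fun t : ℝ => (t:ℂ) * ζ) (nhdsWithin 1 (Set.Iio 1)) (nhds ζ) := by
      have hc : Continuous (fun t : ℝ => (t:ℂ) * ζ) := Complex.continuous_ofReal.mul continuous_const
      have := hc.tendsto 1
      simp only [Complex.ofReal_one, one_mul] at this
      exact this.mono_left nhdsWithin_le_nhds
    have htend : Filter.Tendsto (fun t : ℝ => ‖p ((t:ℂ) * ζ) - 1‖)
        (nhdsWithin 1 (Set.Iio 1)) (nhds (‖p ζ - 1‖)) := by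
      have h2 : Filter.Tendsto (fun t : ℝ => p ((t:ℂ) * ζ)) (nhdsWithin 1 (Set.Iio 1))
          (nhds (p ζ)) := hcont.tendsto.comp htendmul
      have h3 : Continuous (fun x : ℂ => ‖x - 1‖) :=
        continuous_norm.comp (continuous_id.sub continuous_const)
      exact (h3.tendsto (p ζ)).comp h2
    refine le_of_tendsto htend ?_
    filter_upwards [Ioo_mem_nhdsLT_of_mem (Set.mem_Ioc.mpr ⟨zero_lt_one, le_refl (1:ℝ)⟩)] with t ht
    have habs : ‖(t:ℂ) * ζ‖ = t * ‖ζ‖ := by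
      rw [norm_mul, Complex.norm_real, Real.norm_eq_abs, abs_of_pos ht.1]
    have hmemb : (t:ℂ) * ζ ∈ Metric.ball (0:ℂ) s := by
      rw [Metric.mem_ball, Complex.dist_eq, sub_zero, habs]
      nlinarith [norm_nonneg ζ, ht.1, ht.2]
    have hb := hmvt _ hmemb
    rw [hp0, sub_zero] at hb
    rw [habs] at hb
    have hts : t * ‖ζ‖ ≤ s := by nlinarith [norm_nonneg ζ, ht.1, ht.2]
    calc ‖p ((t:ℂ) * ζ) - 1‖ ≤ (1/5)/s * (t * ‖ζ‖) := hb
      _ ≤ (1/5)/s * s := by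
          apply mul_le_mul_of_nonneg_left hts
          positivity
      _ = 1/5 := div_mul_cancel₀ _ hs0.ne'
  -- Step C : improvement
  have stepC : ∀ s : ℝ, 0 < s → s < 1 →
      (∀ ζ : ℂ, ‖ζ‖ ≤ s → ‖q ζ‖ ≤ 1/5) →
      ∀ ζ : ℂ, ‖ζ‖ ≤ s → ‖q ζ‖ ≤ 19/100 := by
    intro s hs0 hs1 hqb ζ hζ
    have hp1 := stepB s hs0 hs1 hqb ζ hζ
    have hpabs : ‖p ζ‖ ≤ 6/5 := by
      have hrw : p ζ = (p ζ - 1) + 1 := by ring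
      rw [hrw]
      calc ‖(p ζ - 1) + 1‖ ≤ ‖p ζ - 1‖ + ‖(1:ℂ)‖ :=
            norm_add_le _ _
        _ ≤ 6/5 := by rw [norm_one]; linarith
    have hpδ : ‖p ζ‖ ^ δ ≤ 6/5 := by
      rcases hδ with h | h <;> subst h
      · norm_num
      · simpa using hpabs
    have hk := key ζ ((hmem ζ).2 (lt_of_le_of_lt hζ hs1))
    by_contra hgt
    push_neg at hgt
    have h1 : (19/100:ℝ)^n ≤ ‖q ζ‖^n := pow_le_pow_left₀ (by norm_num) hgt.le n
    have h3 : (114/100:ℝ) ≤ (114/100)^n := le_self_pow₀ (by norm_num) hn.ne'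
    have h4 : (6:ℝ)^n * (Real.sqrt 2 + 1) * (19/100)^n ≤ Real.sqrt 2 + 6/5 := by
      calc (6:ℝ)^n * (Real.sqrt 2 + 1) * (19/100)^n
          ≤ ‖β‖ * (19/100)^n := by
            apply mul_le_mul_of_nonneg_right hA
            positivity
        _ ≤ ‖β‖ * ‖q ζ‖^n := by
            apply mul_le_mul_of_nonneg_left h1
            exact norm_nonneg β
        _ ≤ Real.sqrt 2 + ‖p ζ‖^δ := hk
        _ ≤ Real.sqrt 2 + 6/5 := by linarith
    have h5 : (114/100:ℝ)^n * (Real.sqrt 2 + 1) ≤ Real.sqrt 2 + 6/5 := by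
      calc (114/100:ℝ)^n * (Real.sqrt 2 + 1) = (6:ℝ)^n * (Real.sqrt 2 + 1) * (19/100)^n := by
            rw [show (114/100:ℝ) = 6 * (19/100) by norm_num, mul_pow]; ring
        _ ≤ _ := h4
    nlinarith [h3, hs2a, Real.sqrt_nonneg 2]
  -- Step D : global bound |p - 1| ≤ 1/5
  have stepD : ∀ z ∈ unitDisk, ‖p z - 1‖ ≤ 1/5 := by
    intro z₀ hz₀
    have hz₀1 : ‖z₀‖ < 1 := (hmem z₀).1 hz₀
    rcases eq_or_lt_of_le (norm_nonneg z₀) with h0 | hpos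
    · have hz00 : z₀ = 0 := by
        have : ‖z₀‖ = 0 := h0.symm
        exact norm_eq_zero.1 this
      rw [hz00, hp0]
      norm_num
    · set s₀ := ‖z₀‖ with hs₀def
      set T : Set ℝ := {s | s ≤ s₀ ∧ ∀ ζ : ℂ, ‖ζ‖ ≤ s → ‖q ζ‖ ≤ 1/5}
        with hTdef
      have hT0 : (0:ℝ) ∈ T := by
        constructor
        · exact hpos.le
        · intro ζ hζ
          have hζ0 : ζ = 0 := norm_eq_zero.1 (le_antisymm hζ (norm_nonneg ζ))
          rw [hζ0, hq0]
          norm_num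
      have hTne : T.Nonempty := ⟨0, hT0⟩
      have hTbdd : BddAbove T := ⟨s₀, fun s hs => hs.1⟩
      set u := sSup T with hu
      have hu0 : 0 ≤ u := le_csSup hTbdd hT0
      have hus : u ≤ s₀ := csSup_le hTne (fun s hs => hs.1)
      have hu1 : u < 1 := lt_of_le_of_lt hus hz₀1
      have hball : ∀ ζ : ℂ, ‖ζ‖ < u → ‖q ζ‖ ≤ 1/5 := by
        intro ζ hζ
        obtain ⟨s, hsT, hlt⟩ := exists_lt_of_lt_csSup hTne hζ
        exact hsT.2 ζ hlt.le
      have huT : ∀ ζ : ℂ, ‖ζ‖ ≤ u → ‖q ζ‖ ≤ 1/5 := by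
        intro ζ hζ
        rcases lt_or_eq_of_le hζ with h | h
        · exact hball ζ h
        · rcases eq_or_lt_of_le hu0 with h0' | hupos
          · have : ζ = 0 := by
              apply norm_eq_zero.1
              rw [h]; exact h0'.symm
            rw [this, hq0]; norm_num
          · have hζ1 : ‖ζ‖ < 1 := by rw [h]; exact hu1
            have hqcont : ContinuousAt q ζ :=
              (hq.differentiableAt (hopen.mem_nhds ((hmem ζ).2 hζ1))).continuousAt
            have htendmul : Filter.Tendsto (fun t : ℝ => (t:ℂ) * ζ)
                (nhdsWithin 1 (Set.Iio 1)) (nhds ζ) := by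
              have hc : Continuous (fun t : ℝ => (t:ℂ) * ζ) :=
                Complex.continuous_ofReal.mul continuous_const
              have := hc.tendsto 1
              simp only [Complex.ofReal_one, one_mul] at this
              exact this.mono_left nhdsWithin_le_nhds
            have htend : Filter.Tendsto (fun t : ℝ => ‖q ((t:ℂ) * ζ)‖)
                (nhdsWithin 1 (Set.Iio 1)) (nhds (‖q ζ‖)) :=
              (continuous_norm.tendsto (q ζ)).comp (hqcont.tendsto.comp htendmul)
            refine le_of_tendsto htend ?_
            filter_upwards [Ioo_mem_nhdsLT_of_mem
              (Set.mem_Ioc.mpr ⟨zero_lt_one, le_refl (1:ℝ)⟩)] with t ht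
            apply hball
            rw [norm_mul, Complex.norm_real, Real.norm_eq_abs, abs_of_pos ht.1, h]
            nlinarith [ht.1, ht.2, hupos]
      by_cases hcase : u < s₀
      · exfalso
        have hstrict : ∀ ζ : ℂ, ‖ζ‖ ≤ u → ‖q ζ‖ < 1/5 := by
          rcases eq_or_lt_of_le hu0 with h0' | hupos
          · intro ζ hζ
            have : ζ = 0 := by
              apply norm_eq_zero.1
              apply le_antisymm _ (norm_nonneg ζ)
              exact le_trans hζ (le_of_eq h0'.symm)
            rw [this, hq0]; norm_num
          · intro ζ hζ
            have := stepC u hupos hu1 huT ζ hζ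
            linarith
        have hVopen : IsOpen (unitDisk ∩ q ⁻¹' (Metric.ball (0:ℂ) (1/5))) :=
          (hq.continuousOn).isOpen_inter_preimage hopen Metric.isOpen_ball
        have hsubV : Metric.closedBall (0:ℂ) u ⊆ unitDisk ∩ q ⁻¹' (Metric.ball (0:ℂ) (1/5)) := by
          intro x hx
          rw [Metric.mem_closedBall, Complex.dist_eq, sub_zero] at hx
          refine ⟨(hmem x).2 (lt_of_le_of_lt hx hu1), ?_⟩
          rw [Set.mem_preimage, Metric.mem_ball, Complex.dist_eq, sub_zero]
          exact hstrict x hx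
        obtain ⟨ε, hε, hthick⟩ := (isCompact_closedBall (0:ℂ) u).exists_cthickening_subset_open
          hVopen hsubV
        have hthick2 : Metric.closedBall (0:ℂ) (ε + u) ⊆
            unitDisk ∩ q ⁻¹' (Metric.ball (0:ℂ) (1/5)) := by
          rw [← cthickening_closedBall hε.le hu0 (0:ℂ)]
          exact hthick
        have hs₁T : min (u + ε) s₀ ∈ T := by
          constructor
          · exact min_le_right _ _
          · intro ζ hζ
            have hζ' : ‖ζ‖ ≤ ε + u :=
              le_trans hζ (le_trans (min_le_left _ _) (by linarith))
            have hmem2 : ζ ∈ unitDisk ∩ q ⁻¹' (Metric.ball (0:ℂ) (1/5)) := by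
              apply hthick2
              rw [Metric.mem_closedBall, Complex.dist_eq, sub_zero]
              exact hζ'
            have := hmem2.2
            rw [Set.mem_preimage, Metric.mem_ball, Complex.dist_eq, sub_zero] at this
            linarith
        have hle : min (u + ε) s₀ ≤ u := le_csSup hTbdd hs₁T
        have hgt : u < min (u + ε) s₀ := lt_min (by linarith) hcase
        linarith
      · have hueq : u = s₀ := le_antisymm hus (not_lt.1 hcase)
        have hqb : ∀ ζ : ℂ, ‖ζ‖ ≤ s₀ → ‖q ζ‖ ≤ 1/5 := by
          rw [← hueq]; exact huT
        exact stepB s₀ hpos hz₀1 hqb z₀ (le_refl s₀)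
  -- Construction of the Schwarz function for p ≺ bean
  have hpack : ∀ z ∈ unitDisk, (0:ℝ) < (p z).re ∧ (2 - p z^2) ≠ 0 ∧
      0 < ((p z^2)/(2 - p z^2)).re ∧ (7/18:ℝ) ≤ ‖(p z^2)/(2 - p z^2)‖ ∧
      ‖(p z^2)/(2 - p z^2)‖ ≤ 18/7 := by
    intro z hz
    have h15 := stepD z hz
    have hre1 : |(p z - 1).re| ≤ 1/5 := (Complex.abs_re_le_norm _).trans h15
    have hresub : (p z - 1).re = (p z).re - 1 := by simp
    have hre : (4/5:ℝ) ≤ (p z).re := by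
      rcases abs_le.1 hre1 with ⟨h1, _⟩
      rw [hresub] at h1
      linarith
    have ht : ‖p z^2 - 1‖ ≤ 11/25 := by
      have hfactor : p z^2 - 1 = (p z - 1) * (p z + 1) := by ring
      rw [hfactor, norm_mul]
      have h2 : ‖p z + 1‖ ≤ 11/5 := by
        have hrw : p z + 1 = (p z - 1) + 2 := by ring
        rw [hrw]
        calc ‖(p z - 1) + 2‖ ≤ ‖p z - 1‖ + ‖2‖ :=
              norm_add_le _ _
          _ ≤ 11/5 := by rw [Complex.norm_two]; linarith
      calc ‖p z - 1‖ * ‖p z + 1‖ ≤ (1/5) * (11/5) :=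
            mul_le_mul h15 h2 (norm_nonneg _) (by norm_num)
        _ = 11/25 := by norm_num
    set t := p z^2 - 1 with htdef
    have he1 : p z^2 = 1 + t := by rw [htdef]; ring
    have he2 : 2 - p z^2 = 1 - t := by rw [htdef]; ring
    have habs1mt : (14/25:ℝ) ≤ ‖1 - t‖ := by
      have h2 : ‖(1:ℂ)‖ ≤ ‖1 - t‖ + ‖t‖ := by
        calc ‖(1:ℂ)‖ = ‖(1 - t) + t‖ := by rw [sub_add_cancel]
          _ ≤ _ := norm_add_le _ _
      rw [norm_one] at h2
      linarith
    have habs1pt : ‖1 + t‖ ≤ 36/25 := by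
      calc ‖1 + t‖ ≤ ‖(1:ℂ)‖ + ‖t‖ := norm_add_le _ _
        _ ≤ 36/25 := by rw [norm_one]; linarith
    have habs1pt' : (14/25:ℝ) ≤ ‖1 + t‖ := by
      have h2 : ‖(1:ℂ)‖ ≤ ‖1 + t‖ + ‖t‖ := by
        calc ‖(1:ℂ)‖ = ‖(1 + t) + (-t)‖ := by rw [add_neg_cancel_right]
          _ ≤ ‖1 + t‖ + ‖-t‖ := norm_add_le _ _
          _ = ‖1 + t‖ + ‖t‖ := by rw [norm_neg]
      rw [norm_one] at h2
      linarith
    have hden : 2 - p z^2 ≠ 0 := by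
      rw [he2]
      intro h
      rw [h] at habs1mt
      simp at habs1mt
      linarith
    have h1mt : (1:ℂ) - t ≠ 0 := by rw [← he2]; exact hden
    refine ⟨by linarith, hden, ?_, ?_, ?_⟩
    · rw [he2, he1, Complex.div_re]
      have hnormSq : 0 < Complex.normSq (1 - t) := Complex.normSq_pos.2 h1mt
      have htsq : t.re^2 + t.im^2 ≤ (11/25)^2 := by
        have hsq := Complex.sq_norm t
        rw [Complex.normSq_apply] at hsq
        nlinarith [ht, norm_nonneg t]
      rw [← add_div]
      apply div_pos
      · have hnum : (1+t).re * (1-t).re + (1+t).im * (1-t).im = 1 - (t.re^2 + t.im^2) := by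
          simp only [Complex.add_re, Complex.sub_re, Complex.add_im, Complex.sub_im,
            Complex.one_re, Complex.one_im]
          ring
        rw [hnum]
        nlinarith
      · exact hnormSq
    · rw [he2, he1, norm_div, le_div_iff₀ (by linarith : (0:ℝ) < ‖1 - t‖)]
      calc (7/18:ℝ) * ‖1 - t‖ ≤ (7/18) * (36/25) := by
            apply mul_le_mul_of_nonneg_left _ (by norm_num)
            calc ‖1 - t‖ ≤ ‖(1:ℂ)‖ + ‖t‖ := by
                  calc ‖1 - t‖ = ‖1 + (-t)‖ := by rw [sub_eq_add_neg]
                    _ ≤ ‖(1:ℂ)‖ + ‖-t‖ := norm_add_le _ _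
                    _ = ‖(1:ℂ)‖ + ‖t‖ := by rw [norm_neg]
              _ ≤ 36/25 := by rw [norm_one]; linarith
        _ ≤ 14/25 := by norm_num
        _ ≤ ‖1 + t‖ := habs1pt'
    · rw [he2, he1, norm_div, div_le_iff₀ (by linarith : (0:ℝ) < ‖1 - t‖)]
      calc ‖1 + t‖ ≤ 36/25 := habs1pt
        _ = (18/7) * (14/25) := by norm_num
        _ ≤ (18/7) * ‖1 - t‖ := by
            apply mul_le_mul_of_nonneg_left habs1mt (by norm_num)
  refine ⟨fun z => ((1:ℂ)/2) * Complex.log (p z ^ 2 / (2 - p z ^ 2)), ?_, ?_, ?_, ?_⟩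
  · -- differentiability
    intro z hz
    obtain ⟨hre, hden, hrre, _, _⟩ := hpack z hz
    apply DifferentiableAt.differentiableWithinAt
    have hpz := hpdA z ((hmem z).1 hz)
    have hinner : DifferentiableAt ℂ (fun z => p z^2/(2 - p z^2)) z :=
      (hpz.pow 2).div ((differentiableAt_const (2:ℂ)).sub (hpz.pow 2)) hden
    have hslit : (p z^2/(2 - p z^2)) ∈ Complex.slitPlane := Or.inl hrre
    exact (hinner.clog hslit).const_mul _
  · -- value at 0
    show ((1:ℂ)/2) * Complex.log (p 0 ^ 2 / (2 - p 0 ^ 2)) = 0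
    rw [hp0]
    norm_num [Complex.log_one]
  · -- bound |w| < 1
    intro z hz
    obtain ⟨hre, hden, hrre, hlo, hup⟩ := hpack z hz
    have hlt2 : ‖Complex.log (p z^2/(2 - p z^2))‖ < 2 :=
      aux_log_bound hrre hlo hup
    show ‖((1:ℂ)/2) * Complex.log (p z ^ 2 / (2 - p z ^ 2))‖ < 1
    rw [norm_mul]
    have habs12 : ‖(1:ℂ)/2‖ = 1/2 := by
      rw [norm_div, norm_one, Complex.norm_two]
    rw [habs12]
    linarith
  · -- the subordination identity
    intro z hz
    obtain ⟨hre, hden, hrre, hlo, hup⟩ := hpack z hz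
    have hr0 : p z^2/(2 - p z^2) ≠ 0 := by
      intro h
      rw [h] at hlo
      simp at hlo
      linarith
    have hr1 : p z^2/(2 - p z^2) + 1 ≠ 0 := by
      intro h
      have : (p z^2/(2 - p z^2) + 1).re = 0 := by rw [h]; simp
      rw [Complex.add_re, Complex.one_re] at this
      linarith
    show p z = bean (((1:ℂ)/2) * Complex.log (p z ^ 2 / (2 - p z ^ 2)))
    unfold bean
    rw [aux_tanh_half_log hr0 hr1]
    have hE : (p z^2/(2 - p z^2) - 1)/(p z^2/(2 - p z^2) + 1) = p z^2 - 1 := by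
      rw [div_eq_iff hr1]
      field_simp
      ring
    rw [hE]
    have h1 : (1:ℂ) + (p z^2 - 1) = p z^2 := by ring
    rw [h1]
    exact (aux_sqrt_sq hre).symm
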